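/- The reciprocal of the determinant of the n×n Hilbert matrix is an integer; explicitly, 1/det(H_n) = c_{2n}/c_n^4 = n! · ∏_{i=1}^{2n−1} binomial(i, ⌊i/2⌋). -/

import Mathlib

open Finset Matrix

def Hmat (n : ℕ) : Matrix (Fin n) (Fin n) ℚ :=
  Matrix.of fun i j : Fin n => (1 : ℚ) / ((i : ℕ) + (j : ℕ) + 1)

lemma denom_ne (a b : ℕ) : ((a : ℚ) + b + 1) ≠ 0 := by positivity

lemma step1 (n : ℕ) :
    (Hmat (n+1)).det =
      (Matrix.of fun i j : Fin (n+1) =>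
        if i = Fin.last n then (1:ℚ)/((n:ℕ)+(j:ℕ)+1)
        else (1:ℚ)/((i:ℕ)+(j:ℕ)+1) - 1/((n:ℕ)+(j:ℕ)+1)).det := by
  apply Matrix.det_eq_of_forall_row_eq_smul_add_const
    (c := fun i => if i = Fin.last n then 0 else 1) (k := Fin.last n)
  · simp
  · intro i j
    by_cases h : i = Fin.last n <;>
      simp [Hmat, h, Fin.val_last]

noncomputable section
variable (n : ℕ)

def M2 : Matrix (Fin (n+1)) (Fin (n+1)) ℚ :=
  Matrix.of fun i j => if i = Fin.last n then 1 else (1:ℚ)/((i:ℕ)+(j:ℕ)+1)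

lemma step2 : (Matrix.of fun i j : Fin (n+1) =>
        if i = Fin.last n then (1:ℚ)/((n:ℕ)+(j:ℕ)+1)
        else (1:ℚ)/((i:ℕ)+(j:ℕ)+1) - 1/((n:ℕ)+(j:ℕ)+1)) =
    Matrix.diagonal (fun i : Fin (n+1) => if i = Fin.last n then 1 else (n:ℚ) - (i:ℕ)) *
      M2 n * Matrix.diagonal (fun j : Fin (n+1) => (1:ℚ)/((n:ℕ)+(j:ℕ)+1)) := by
  ext i j
  rw [Matrix.mul_diagonal, Matrix.diagonal_mul]
  by_cases h : i = Fin.last n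
  · simp [M2, h]
  · simp only [M2, Matrix.of_apply, h, if_false]
    field_simp
    ring

def M3 : Matrix (Fin (n+1)) (Fin (n+1)) ℚ :=
  Matrix.of fun i j =>
    if i = Fin.last n then (if j = Fin.last n then (1:ℚ) else 0)
    else (if j = Fin.last n then (1:ℚ)/((i:ℕ)+(n:ℕ)+1)
          else (1:ℚ)/((i:ℕ)+(j:ℕ)+1) - 1/((i:ℕ)+(n:ℕ)+1))

def M4 : Matrix (Fin (n+1)) (Fin (n+1)) ℚ :=
  Matrix.of fun i j =>
    if i = Fin.last n then (if j = Fin.last n then (1:ℚ) else 0)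
    else (if j = Fin.last n then 1 else (1:ℚ)/((i:ℕ)+(j:ℕ)+1))

lemma step3 : (M2 n).det = (M3 n).det := by
  rw [← Matrix.det_transpose (M2 n), ← Matrix.det_transpose (M3 n)]
  apply Matrix.det_eq_of_forall_row_eq_smul_add_const
    (c := fun i => if i = Fin.last n then 0 else 1) (k := Fin.last n)
  · simp
  · intro i j
    by_cases h : i = Fin.last n <;> by_cases h2 : j = Fin.last n <;>
      simp [M2, M3, Matrix.transpose_apply, h, h2, Fin.val_last]

lemma step4 : M3 n =
    Matrix.diagonal (fun i : Fin (n+1) => if i = Fin.last n then 1 else (1:ℚ)/((i:ℕ)+(n:ℕ)+1)) *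
      M4 n * Matrix.diagonal (fun j : Fin (n+1) => if j = Fin.last n then 1 else (n:ℚ) - (j:ℕ)) := by
  ext i j
  rw [Matrix.mul_diagonal, Matrix.diagonal_mul]
  by_cases h : i = Fin.last n <;> by_cases h2 : j = Fin.last n <;>
    simp only [M3, M4, Matrix.of_apply, h, h2, if_true, if_false, ite_true, ite_false]
  · simp
  · simp
  · simp
  · field_simp
    ring

lemma step5 : (M4 n).det = (Hmat n).det := by
  rw [Matrix.det_succ_row (M4 n) (Fin.last n)]
  rw [Finset.sum_eq_single (Fin.last n)]
  · rw [Fin.succAbove_last]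
    have h4 : ((M4 n).submatrix Fin.castSucc Fin.castSucc) = Hmat n := by
      ext i j
      simp [M4, Hmat, Matrix.submatrix_apply, (Fin.castSucc_lt_last i).ne,
        (Fin.castSucc_lt_last j).ne]
    have h1 : M4 n (Fin.last n) (Fin.last n) = 1 := by simp [M4]
    rw [h4, h1, Fin.val_last, ← two_mul, pow_mul]
    norm_num
  · intro j _ hj
    simp [M4, hj]
  · simp

-- assume previous lemmas; test product lemmas
lemma fact_mul_prod (n k : ℕ) :
    n.factorial * ∏ j ∈ range k, (n + 1 + j) = (n + k).factorial := by
  induction k with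
  | zero => simp
  | succ k ih =>
    rw [Finset.prod_range_succ, ← mul_assoc, ih, ← Nat.add_assoc, Nat.factorial_succ]
    ring

lemma prod_sub_eq_factorial (n : ℕ) :
    ∏ i ∈ range n, ((n : ℚ) - i) = n.factorial := by
  rw [← Finset.prod_range_reflect]
  have : ∀ j ∈ range n, ((n : ℚ) - (n - 1 - j : ℕ)) = ((j + 1 : ℕ) : ℚ) := by
    intro j hj
    rw [Finset.mem_range] at hj
    have h2 : n - 1 - j = n - (j+1) := by omega
    rw [h2, Nat.cast_sub (by omega)]
    push_cast; ring
  rw [Finset.prod_congr rfl this, ← Nat.cast_prod, Finset.prod_range_add_one_eq_factorial]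

lemma prod_P1 (n : ℕ) :
    ∏ i : Fin (n+1), (if i = Fin.last n then (1:ℚ) else (n:ℚ) - (i:ℕ)) =
      n.factorial := by
  rw [Fin.prod_univ_castSucc]
  simp only [if_pos rfl, if_true, mul_one]
  have : ∀ i : Fin n, (if (Fin.castSucc i) = Fin.last n then (1:ℚ) else (n:ℚ) - ((Fin.castSucc i : Fin (n+1)):ℕ)) = (n:ℚ) - (i:ℕ) := by
    intro i
    rw [if_neg (Fin.castSucc_lt_last i).ne, Fin.coe_castSucc]
  rw [Finset.prod_congr rfl (fun i _ => this i)]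
  rw [Fin.prod_univ_eq_prod_range (fun i => (n:ℚ) - i)]
  exact prod_sub_eq_factorial n

lemma prod_shift (n k : ℕ) :
    ∏ j : Fin k, ((n:ℚ) + (j:ℕ) + 1) = (n + k).factorial / n.factorial := by
  rw [Fin.prod_univ_eq_prod_range (fun j => (n:ℚ) + j + 1)]
  have : ∀ j ∈ range k, ((n:ℚ) + j + 1) = ((n + 1 + j : ℕ) : ℚ) := by
    intro j _; push_cast; ring
  rw [Finset.prod_congr rfl this, ← Nat.cast_prod,
    eq_div_iff (by positivity : (n.factorial : ℚ) ≠ 0)]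
  rw [← Nat.cast_mul, mul_comm, fact_mul_prod]

lemma prod_P2 (n : ℕ) :
    ∏ j : Fin (n+1), ((1:ℚ) / ((n:ℕ) + (j:ℕ) + 1)) =
      n.factorial / (2*n+1).factorial := by
  simp only [one_div]
  rw [Finset.prod_inv_distrib, prod_shift n (n+1)]
  rw [show n + (n+1) = 2*n+1 by ring]
  simp

lemma prod_P3 (n : ℕ) :
    ∏ i : Fin (n+1), (if i = Fin.last n then (1:ℚ) else 1/((i:ℕ)+(n:ℕ)+1)) =
      n.factorial / (2*n).factorial := by
  rw [Fin.prod_univ_castSucc]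
  simp only [if_pos rfl, if_true, mul_one]
  have : ∀ i : Fin n, (if (Fin.castSucc i) = Fin.last n then (1:ℚ) else 1/(((Fin.castSucc i : Fin (n+1)):ℕ)+(n:ℕ)+1)) = ((n:ℚ) + (i:ℕ) + 1)⁻¹ := by
    intro i
    rw [if_neg (Fin.castSucc_lt_last i).ne, Fin.coe_castSucc, one_div]
    ring_nf
  rw [Finset.prod_congr rfl (fun i _ => this i), Finset.prod_inv_distrib, prod_shift n n]
  rw [show n + n = 2*n by ring]
  simp

lemma hilbert_step (n : ℕ) :
    (Hmat (n+1)).det =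
      ((n.factorial : ℚ)^4 / ((2*n).factorial * (2*n+1).factorial)) * (Hmat n).det := by
  rw [step1, step2, Matrix.det_mul, Matrix.det_mul, Matrix.det_diagonal, Matrix.det_diagonal,
    step3, step4, Matrix.det_mul, Matrix.det_mul, Matrix.det_diagonal, Matrix.det_diagonal,
    step5, prod_P1, prod_P2, prod_P3]
  have h1 : ((2*n).factorial : ℚ) ≠ 0 := by positivity
  have h2 : ((2*n+1).factorial : ℚ) ≠ 0 := by positivity
  field_simp

lemma hilbert_det (n : ℕ) :
    (Hmat n).det = ((∏ i ∈ range n, Nat.factorial i : ℕ) : ℚ)^4 /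
      ((∏ i ∈ range (2*n), Nat.factorial i : ℕ) : ℚ) := by
  induction n with
  | zero => simp [Hmat]
  | succ n ih =>
    rw [hilbert_step, ih]
    have e2 : 2 * (n+1) = (2*n + 1) + 1 := by ring
    rw [Finset.prod_range_succ, e2, Finset.prod_range_succ, Finset.prod_range_succ]
    have h1 : ((2*n).factorial : ℚ) ≠ 0 := by positivity
    have h2 : ((2*n+1).factorial : ℚ) ≠ 0 := by positivity
    have h3 : ((∏ i ∈ range n, Nat.factorial i : ℕ) : ℚ) ≠ 0 := by
      rw [Nat.cast_prod]; positivity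
    have h4 : ((∏ i ∈ range (2*n), Nat.factorial i : ℕ) : ℚ) ≠ 0 := by
      rw [Nat.cast_prod]; positivity
    have h5 : ((n.factorial : ℕ) : ℚ) ≠ 0 := by positivity
    push_cast
    field_simp

lemma aux_nat : ∀ n : ℕ, ∏ i ∈ range (2*n), Nat.factorial i =
    (∏ i ∈ range n, Nat.factorial i)^4 *
      (Nat.factorial n * ∏ i ∈ Finset.Icc 1 (2*n-1), Nat.choose i (i/2))
  | 0 => by simp
  | 1 => by decide
  | (m+2) => by
    have ih := aux_nat (m+1)
    rw [show 2*(m+1) = 2*m+2 from by ring, show 2*m+2-1 = 2*m+1 from by omega] at ih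
    rw [show 2*(m+2) = (2*m+2)+1+1 from by ring, Finset.prod_range_succ,
      Finset.prod_range_succ, ih, show (2*m+2)+1+1-1 = 2*m+3 from by omega,
      show (2*m+2)+1 = 2*m+3 from by ring]
    have hset : Finset.Icc 1 (2*m+3) =
        insert (2*m+2) (insert (2*m+3) (Finset.Icc 1 (2*m+1))) := by
      ext x
      simp only [Finset.mem_Icc, Finset.mem_insert]
      omega
    rw [hset, Finset.prod_insert (by simp only [Finset.mem_Icc, Finset.mem_insert]; omega),
      Finset.prod_insert (by simp only [Finset.mem_Icc]; omega)]
    rw [show (2*m+2)/2 = m+1 from by omega, show (2*m+3)/2 = m+1 from by omega]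
    have hc1 : Nat.choose (2*m+2) (m+1) * (m+1).factorial * (m+1).factorial
        = (2*m+2).factorial := by
      have h := Nat.choose_mul_factorial_mul_factorial (show m+1 ≤ 2*m+2 by omega)
      rwa [show 2*m+2-(m+1) = m+1 from by omega] at h
    have hc2 : Nat.choose (2*m+3) (m+1) * (m+1).factorial * (m+2).factorial
        = (2*m+3).factorial := by
      have h := Nat.choose_mul_factorial_mul_factorial (show m+1 ≤ 2*m+3 by omega)
      rwa [show 2*m+3-(m+1) = m+2 from by omega] at h
    have hr : ∏ i ∈ range (m+2), Nat.factorial i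
        = (∏ i ∈ range (m+1), Nat.factorial i) * (m+1).factorial :=
      Finset.prod_range_succ _ _
    rw [hr, ← hc1, ← hc2, show (m+2).factorial = (m+2) * (m+1).factorial from rfl]
    ring

theorem hilbert_det_reciprocal (n : ℕ) :
    1 / (Matrix.of fun i j : Fin n => (1 : ℚ) / ((i : ℕ) + (j : ℕ) + 1)).det =
        ((∏ i ∈ Finset.range (2 * n), Nat.factorial i : ℕ) : ℚ) /
          ((∏ i ∈ Finset.range n, Nat.factorial i : ℕ) : ℚ) ^ 4 ∧
    1 / (Matrix.of fun i j : Fin n => (1 : ℚ) / ((i : ℕ) + (j : ℕ) + 1)).det =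
        ((Nat.factorial n *
          ∏ i ∈ Finset.Icc 1 (2 * n - 1), Nat.choose i (i / 2) : ℕ) : ℚ) := by
  have h1 : 1 / (Matrix.of fun i j : Fin n => (1 : ℚ) / ((i : ℕ) + (j : ℕ) + 1)).det =
      ((∏ i ∈ Finset.range (2 * n), Nat.factorial i : ℕ) : ℚ) /
        ((∏ i ∈ Finset.range n, Nat.factorial i : ℕ) : ℚ) ^ 4 := by
    have : (Matrix.of fun i j : Fin n => (1 : ℚ) / ((i : ℕ) + (j : ℕ) + 1)) = Hmat n := rfl
    rw [this, hilbert_det, one_div_div]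
  refine ⟨h1, ?_⟩
  rw [h1, aux_nat n]
  have hP : ((∏ i ∈ Finset.range n, Nat.factorial i : ℕ) : ℚ) ^ 4 ≠ 0 := by
    rw [Nat.cast_prod]; positivity
  push_cast
  rw [Nat.cast_prod] at hP
  exact mul_div_cancel_left₀ _ hP
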